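/- Let H be the Hankel matrix with entries h_{i,j} = μ_{i+j} where μ_m = 1 if m+1 is a power of 2 and μ_m = 0 otherwise. Let s be the sign sequence with s_0=1, s_{2i}=(-1)^i s_i, s_{2i+1}=s_i; let D_s = diag(s_0, s_1, ...), D_a = diag(1,-1,1,-1,...), and L the lower-triangular matrix with l_{i,j} = binom(2i+1, i-j) mod 2. Then H = D_s · L · D_a · L^t · D_s (as an identity of n×n matrices for every n). -/
import Mathlib

open Finset

/-- entries of `L`: `binom(2i+1, i-k) mod 2`, extended by `0` for `k > i`. -/
private def ll (i k : ℕ) : ℤ :=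
  if k ≤ i then (((2 * i + 1).choose (i - k) % 2 : ℕ) : ℤ) else 0

private lemma ll_zero {i k : ℕ} (h : i < k) : ll i k = 0 := if_neg (by omega)

private lemma cm2 (n k : ℕ) :
    n.choose k % 2 = ((n % 2).choose (k % 2) * (n / 2).choose (k / 2)) % 2 :=
  Choose.choose_modEq_choose_mod_mul_choose_div_nat (p := 2)

private lemma ll_oe (a c : ℕ) : ll (2 * a + 1) (2 * c) = ll a c := by
  unfold ll
  rcases le_or_gt c a with h | h
  · rw [if_pos (by omega), if_pos h]
    have e1 : 2 * (2 * a + 1) + 1 = 4 * a + 3 := by ring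
    have e2 : 2 * a + 1 - 2 * c = 2 * (a - c) + 1 := by omega
    rw [e1, e2, cm2 (4 * a + 3) (2 * (a - c) + 1)]
    have e3 : (4 * a + 3) % 2 = 1 := by omega
    have e4 : (2 * (a - c) + 1) % 2 = 1 := by omega
    have e5 : (4 * a + 3) / 2 = 2 * a + 1 := by omega
    have e6 : (2 * (a - c) + 1) / 2 = a - c := by omega
    rw [e3, e4, e5, e6]
    norm_num
  · rw [if_neg (by omega), if_neg (by omega)]

private lemma ll_oo (a c : ℕ) : ll (2 * a + 1) (2 * c + 1) = ll a c := by
  unfold ll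
  rcases le_or_gt c a with h | h
  · rw [if_pos (by omega), if_pos h]
    have e1 : 2 * (2 * a + 1) + 1 = 4 * a + 3 := by ring
    have e2 : 2 * a + 1 - (2 * c + 1) = 2 * (a - c) := by omega
    rw [e1, e2, cm2 (4 * a + 3) (2 * (a - c))]
    have e3 : (4 * a + 3) % 2 = 1 := by omega
    have e4 : (2 * (a - c)) % 2 = 0 := by omega
    have e5 : (4 * a + 3) / 2 = 2 * a + 1 := by omega
    have e6 : (2 * (a - c)) / 2 = a - c := by omega
    rw [e3, e4, e5, e6]
    simp
  · rw [if_neg (by omega), if_neg (by omega)]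

-- expresses ll a c through one Lucas step, for c ≤ a
private lemma ll_step {a c : ℕ} (h : c ≤ a) :
    ll a c = (((1 : ℕ).choose ((a - c) % 2) * a.choose ((a - c) / 2)) % 2 : ℕ) := by
  unfold ll
  rw [if_pos h, cm2 (2 * a + 1) (a - c)]
  have e3 : (2 * a + 1) % 2 = 1 := by omega
  have e5 : (2 * a + 1) / 2 = a := by omega
  rw [e3, e5]

private lemma ll_ee (a c : ℕ) :
    ll (2 * a) (2 * c) = if (a + c) % 2 = 0 then ll a c else 0 := by
  rcases le_or_gt c a with h | h
  · have key : ll (2 * a) (2 * c)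
        = (((0 : ℕ).choose ((a - c) % 2) * a.choose ((a - c) / 2)) % 2 : ℕ) := by
      unfold ll
      rw [if_pos (by omega)]
      have e1 : 2 * (2 * a) + 1 = 4 * a + 1 := by ring
      have e2 : 2 * a - 2 * c = 2 * (a - c) := by omega
      rw [e1, e2, cm2 (4 * a + 1) (2 * (a - c))]
      have e3 : (4 * a + 1) % 2 = 1 := by omega
      have e5 : (4 * a + 1) / 2 = 2 * a := by omega
      rw [e3, e5]
      have e4 : (2 * (a - c)) % 2 = 0 := by omega
      have e6 : (2 * (a - c)) / 2 = a - c := by omega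
      rw [e4, e6]
      rw [show Nat.choose 1 0 = 1 from rfl, one_mul, cm2 (2 * a) (a - c)]
      have : (2 * a) % 2 = 0 := by omega
      rw [this, Nat.mul_div_cancel_left a (by norm_num)]
    rcases Nat.mod_two_eq_zero_or_one (a + c) with hp | hp
    · rw [if_pos hp, key, ll_step h]
      have : (a - c) % 2 = 0 := by omega
      rw [this]
      norm_num
    · rw [if_neg (by omega), key]
      have : (a - c) % 2 = 1 := by omega
      rw [this]
      simp
  · rw [ll_zero (by omega), ll_zero h, ite_self]

private lemma ll_eo (a c : ℕ) :
    ll (2 * a) (2 * c + 1) = if (a + c) % 2 = 1 then ll a c else 0 := by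
  rcases lt_or_ge c a with h | h
  · have key : ll (2 * a) (2 * c + 1)
        = (((0 : ℕ).choose ((a - c - 1) % 2) * a.choose ((a - c - 1) / 2)) % 2 : ℕ) := by
      unfold ll
      rw [if_pos (by omega)]
      have e1 : 2 * (2 * a) + 1 = 4 * a + 1 := by ring
      have e2 : 2 * a - (2 * c + 1) = 2 * (a - c - 1) + 1 := by omega
      rw [e1, e2, cm2 (4 * a + 1) (2 * (a - c - 1) + 1)]
      have e3 : (4 * a + 1) % 2 = 1 := by omega
      have e5 : (4 * a + 1) / 2 = 2 * a := by omega
      rw [e3, e5]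
      have e4 : (2 * (a - c - 1) + 1) % 2 = 1 := by omega
      have e6 : (2 * (a - c - 1) + 1) / 2 = a - c - 1 := by omega
      rw [e4, e6]
      rw [show Nat.choose 1 1 = 1 from rfl, one_mul, cm2 (2 * a) (a - c - 1)]
      have : (2 * a) % 2 = 0 := by omega
      rw [this, Nat.mul_div_cancel_left a (by norm_num)]
    rcases Nat.mod_two_eq_zero_or_one (a + c) with hp | hp
    · rw [if_neg (by omega), key]
      have : (a - c - 1) % 2 = 1 := by omega
      rw [this]
      simp
    · rw [if_pos hp, key, ll_step (le_of_lt h)]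
      have h1 : (a - c - 1) % 2 = 0 := by omega
      have h2 : (a - c) % 2 = 1 := by omega
      have h3 : (a - c) / 2 = (a - c - 1) / 2 := by omega
      rw [h1, h2, h3]
      simp
  · rw [ll_zero (by omega)]
    rcases eq_or_lt_of_le h with rfl | h'
    · rw [if_neg (by omega)]
    · rw [ll_zero h', ite_self]

private def FF (i j : ℕ) : ℤ := ∑ k ∈ Finset.range (i + 1), (-1) ^ k * ll i k * ll j k

private lemma FF_eq (i j N : ℕ) (h : i + 1 ≤ N) :
    ∑ k ∈ Finset.range N, (-1 : ℤ) ^ k * ll i k * ll j k = FF i j := by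
  unfold FF
  refine (Finset.sum_subset (Finset.range_subset_range.2 h) fun k _ hk => ?_).symm
  simp only [Finset.mem_range] at hk
  rw [ll_zero (show i < k by omega), mul_zero, zero_mul]

private lemma sum_split (f : ℕ → ℤ) :
    ∀ N, ∑ k ∈ Finset.range (2 * N), f k = ∑ c ∈ Finset.range N, (f (2 * c) + f (2 * c + 1))
  | 0 => by simp
  | N + 1 => by
    rw [show 2 * (N + 1) = 2 * N + 1 + 1 by ring, Finset.sum_range_succ, Finset.sum_range_succ,
      sum_split f N, Finset.sum_range_succ, show 2 * N + 1 = 2 * N + 1 from rfl]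
    ring

private lemma np1 (c : ℕ) : (-1 : ℤ) ^ (2 * c) = 1 := by
  rw [pow_mul]; norm_num

private lemma np2 (c : ℕ) : (-1 : ℤ) ^ (2 * c + 1) = -1 := by
  rw [pow_succ, np1]; ring

private lemma F_oo (a b : ℕ) : FF (2 * a + 1) (2 * b + 1) = 0 := by
  unfold FF
  rw [show 2 * a + 1 + 1 = 2 * (a + 1) by ring, sum_split]
  apply Finset.sum_eq_zero
  intro c _
  rw [ll_oe, ll_oo, ll_oe, ll_oo, np1, np2]
  ring

private lemma F_oe (a b : ℕ) : FF (2 * a + 1) (2 * b) = (-1) ^ b * FF a b := by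
  unfold FF
  rw [show 2 * a + 1 + 1 = 2 * (a + 1) by ring, sum_split, Finset.mul_sum]
  apply Finset.sum_congr rfl
  intro c _
  rw [ll_oe, ll_oo, ll_ee, ll_eo, np1, np2]
  have hb : (-1 : ℤ) ^ b * ((-1) ^ c * ll a c * ll b c)
      = ((-1) ^ b * (-1) ^ c) * (ll a c * ll b c) := by ring
  rw [hb, ← pow_add]
  rcases Nat.mod_two_eq_zero_or_one (b + c) with hp | hp
  · rw [if_pos hp, if_neg (by omega), Even.neg_one_pow (Nat.even_iff.2 hp)]
    ring
  · rw [if_neg (by omega), if_pos hp, Odd.neg_one_pow (Nat.odd_iff.2 hp)]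
    ring

private lemma F_ee (a b : ℕ) :
    FF (2 * a) (2 * b) = if (a + b) % 2 = 0 then (-1) ^ a * FF a b else 0 := by
  have ext : FF (2 * a) (2 * b)
      = ∑ k ∈ Finset.range (2 * (a + 1)), (-1 : ℤ) ^ k * ll (2 * a) k * ll (2 * b) k :=
    (FF_eq _ _ _ (by omega)).symm
  rw [ext, sum_split]
  rcases Nat.mod_two_eq_zero_or_one (a + b) with hp | hp
  · rw [if_pos hp]
    unfold FF
    rw [Finset.mul_sum]
    apply Finset.sum_congr rfl
    intro c _
    rw [ll_ee, ll_eo, ll_ee, ll_eo, np1, np2]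
    have hb : (-1 : ℤ) ^ a * ((-1) ^ c * ll a c * ll b c)
        = ((-1) ^ a * (-1) ^ c) * (ll a c * ll b c) := by ring
    rw [hb, ← pow_add]
    rcases Nat.mod_two_eq_zero_or_one (a + c) with h1 | h1
    · rw [if_pos h1, if_pos (show (b + c) % 2 = 0 by omega), if_neg (by omega),
        if_neg (by omega), Even.neg_one_pow (Nat.even_iff.2 h1)]
      ring
    · rw [if_neg (by omega), if_neg (by omega), if_pos h1,
        if_pos (show (b + c) % 2 = 1 by omega), Odd.neg_one_pow (Nat.odd_iff.2 h1)]
      ring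
  · rw [if_neg (by omega)]
    apply Finset.sum_eq_zero
    intro c _
    rw [ll_ee, ll_eo, ll_ee, ll_eo, np1, np2]
    rcases Nat.mod_two_eq_zero_or_one (a + c) with h1 | h1
    · rw [if_pos h1, if_neg (show ¬ (b + c) % 2 = 0 by omega), if_neg (by omega),
        if_pos (show (b + c) % 2 = 1 by omega)]
      ring
    · rw [if_neg (by omega), if_pos (show (b + c) % 2 = 0 by omega), if_pos h1,
        if_neg (show ¬ (b + c) % 2 = 1 by omega)]
      ring

private lemma FF_symm (i j : ℕ) : FF i j = FF j i := by
  rw [← FF_eq i j (i + j + 1) (by omega), ← FF_eq j i (i + j + 1) (by omega)]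
  apply Finset.sum_congr rfl
  intro k _
  ring

open Classical in
private noncomputable def mu (m : ℕ) : ℤ := if ∃ k : ℕ, m + 1 = 2 ^ k then 1 else 0

private lemma mu_zero : mu 0 = 1 := if_pos ⟨0, rfl⟩

open Classical in
private lemma mu_odd (m : ℕ) : mu (2 * m + 1) = mu m := by
  unfold mu
  have hiff : (∃ k : ℕ, 2 * m + 1 + 1 = 2 ^ k) ↔ (∃ k : ℕ, m + 1 = 2 ^ k) := by
    constructor
    · rintro ⟨k, hk⟩
      cases k with
      | zero => simp at hk
      | succ k => exact ⟨k, by rw [pow_succ] at hk; omega⟩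
    · rintro ⟨k, hk⟩
      exact ⟨k + 1, by rw [pow_succ]; omega⟩
  exact if_congr hiff rfl rfl

open Classical in
private lemma mu_even (m : ℕ) (h : 0 < m) : mu (2 * m) = 0 := by
  apply if_neg
  rintro ⟨k, hk⟩
  cases k with
  | zero => simp at hk; omega
  | succ k => rw [pow_succ] at hk; omega

private lemma s_even' (s : ℕ → ℤ) (heven : ∀ i, 1 ≤ i → s (2 * i) = (-1) ^ i * s i) :
    ∀ b, s (2 * b) = (-1) ^ b * s b := by
  intro b
  rcases Nat.eq_zero_or_pos b with rfl | h
  · simp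
  · exact heven b h

private lemma s_sq (s : ℕ → ℤ) (h0 : s 0 = 1)
    (heven : ∀ i, 1 ≤ i → s (2 * i) = (-1) ^ i * s i)
    (hodd : ∀ i, s (2 * i + 1) = s i) : ∀ i, s i * s i = 1 := by
  intro i
  induction i using Nat.strong_induction_on with
  | _ i ih =>
    rcases Nat.even_or_odd' i with ⟨c, hc | hc⟩
    · subst hc
      rcases Nat.eq_zero_or_pos c with rfl | hcpos
      · norm_num [h0]
      · rw [heven c hcpos, mul_mul_mul_comm, ← pow_add, ih c (by omega),
          Even.neg_one_pow ⟨c, by ring⟩, one_mul]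
    · subst hc
      rw [hodd c]
      exact ih c (by omega)

private lemma key (s : ℕ → ℤ) (h0 : s 0 = 1)
    (heven : ∀ i, 1 ≤ i → s (2 * i) = (-1) ^ i * s i)
    (hodd : ∀ i, s (2 * i + 1) = s i) :
    ∀ m i j, i + j ≤ m → FF i j = s i * s j * mu (i + j) := by
  have FF00 : FF 0 0 = 1 := by
    unfold FF
    rw [Finset.sum_range_one]
    unfold ll
    norm_num
  intro m
  induction m with
  | zero =>
    intro i j h
    have hi : i = 0 := by omega
    have hj : j = 0 := by omega
    subst hi; subst hj
    rw [FF00, h0, mu_zero]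
    ring
  | succ m ih =>
    intro i j hij
    rcases Nat.even_or_odd' i with ⟨a, ha | ha⟩ <;>
      rcases Nat.even_or_odd' j with ⟨b, hb | hb⟩ <;> subst ha <;> subst hb
    · -- i = 2a, j = 2b
      rcases Nat.eq_zero_or_pos (a + b) with h00 | hpos
      · have ha0 : a = 0 := by omega
        have hb0 : b = 0 := by omega
        subst ha0; subst hb0
        norm_num [FF00, h0, mu_zero]
      · rw [F_ee, s_even' s heven a, s_even' s heven b,
          show 2 * a + 2 * b = 2 * (a + b) by ring, mu_even _ hpos]
        rcases Nat.mod_two_eq_zero_or_one (a + b) with hp | hp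
        · rw [if_pos hp, ih a b (by omega)]
          have hmu : mu (a + b) = 0 := by
            obtain ⟨t, ht⟩ : ∃ t, a + b = 2 * t := ⟨(a + b) / 2, by omega⟩
            rw [ht]
            exact mu_even _ (by omega)
          rw [hmu]
          ring
        · rw [if_neg (by omega)]
          ring
    · -- i = 2a, j = 2b+1
      rw [FF_symm, F_oe, ih b a (by omega), s_even' s heven a, hodd b,
        show 2 * a + (2 * b + 1) = 2 * (a + b) + 1 by ring, mu_odd,
        show b + a = a + b by ring]
      ring
    · -- i = 2a+1, j = 2b
      rw [F_oe, ih a b (by omega), s_even' s heven b, hodd a,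
        show 2 * a + 1 + 2 * b = 2 * (a + b) + 1 by ring, mu_odd]
      ring
    · -- i = 2a+1, j = 2b+1
      rw [F_oo, show 2 * a + 1 + (2 * b + 1) = 2 * (a + b + 1) by ring,
        mu_even _ (by omega)]
      ring

open Classical in
/-- `H = D_s · L · D_a · Lᵗ · D_s` as `n×n` matrices for every `n`, where `H` is the Hankel
matrix of the sequence `μ_m = 1` iff `m+1` is a power of `2`, `s` is the sign sequence with
`s 0 = 1`, `s (2i) = (-1)^i s i`, `s (2i+1) = s i`, `D_a = diag(1,-1,1,-1,…)` and `L` is the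
lower-triangular matrix with entries `binom(2i+1, i-j) mod 2`. -/
theorem hankel_LU_decomposition (s : ℕ → ℤ) (h0 : s 0 = 1)
    (heven : ∀ i, 1 ≤ i → s (2 * i) = (-1) ^ i * s i)
    (hodd : ∀ i, s (2 * i + 1) = s i) (n : ℕ) :
    (Matrix.of fun i j : Fin n =>
        if ∃ k : ℕ, (i : ℕ) + (j : ℕ) + 1 = 2 ^ k then (1 : ℤ) else 0) =
      Matrix.diagonal (fun i : Fin n => s i) *
        (Matrix.of fun i j : Fin n =>
          if (j : ℕ) ≤ (i : ℕ) then (((2 * (i : ℕ) + 1).choose ((i : ℕ) - (j : ℕ)) % 2 : ℕ) : ℤ)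
          else 0) *
        Matrix.diagonal (fun i : Fin n => (-1) ^ (i : ℕ)) *
        Matrix.transpose (Matrix.of fun i j : Fin n =>
          if (j : ℕ) ≤ (i : ℕ) then (((2 * (i : ℕ) + 1).choose ((i : ℕ) - (j : ℕ)) % 2 : ℕ) : ℤ)
          else 0) *
        Matrix.diagonal (fun i : Fin n => s i) := by
  ext i j
  have hL : ∀ p q : Fin n,
      (Matrix.of fun i j : Fin n =>
        if (j : ℕ) ≤ (i : ℕ) then (((2 * (i : ℕ) + 1).choose ((i : ℕ) - (j : ℕ)) % 2 : ℕ) : ℤ)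
        else 0) p q = ll (p : ℕ) (q : ℕ) := fun p q => rfl
  rw [Matrix.mul_diagonal, Matrix.mul_apply]
  simp only [Matrix.mul_diagonal, Matrix.diagonal_mul, Matrix.transpose_apply, hL]
  have hsum : ∀ k : Fin n, s (i : ℕ) * ll (i : ℕ) (k : ℕ) * (-1) ^ (k : ℕ) * ll (j : ℕ) (k : ℕ)
      = s (i : ℕ) * ((-1) ^ (k : ℕ) * ll (i : ℕ) (k : ℕ) * ll (j : ℕ) (k : ℕ)) := by
    intro k; ring
  rw [Finset.sum_congr rfl fun k _ => hsum k, ← Finset.mul_sum]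
  have hfin : (∑ k : Fin n, (-1 : ℤ) ^ (k : ℕ) * ll (i : ℕ) (k : ℕ) * ll (j : ℕ) (k : ℕ))
      = ∑ k ∈ Finset.range n, (-1 : ℤ) ^ k * ll (i : ℕ) k * ll (j : ℕ) k :=
    Fin.sum_univ_eq_sum_range (fun k => (-1 : ℤ) ^ k * ll (i : ℕ) k * ll (j : ℕ) k) n
  rw [hfin, FF_eq _ _ _ i.isLt, key s h0 heven hodd ((i : ℕ) + (j : ℕ)) _ _ le_rfl]
  have hmu : (Matrix.of fun i j : Fin n =>
      if ∃ k : ℕ, (i : ℕ) + (j : ℕ) + 1 = 2 ^ k then (1 : ℤ) else 0) i j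
      = mu ((i : ℕ) + (j : ℕ)) := rfl
  rw [hmu]
  have h1 := s_sq s h0 heven hodd (i : ℕ)
  have h2 := s_sq s h0 heven hodd (j : ℕ)
  calc mu ((i : ℕ) + (j : ℕ))
      = (s (i : ℕ) * s (i : ℕ)) * (s (j : ℕ) * s (j : ℕ)) * mu ((i : ℕ) + (j : ℕ)) := by
        rw [h1, h2]; ring
    _ = s (i : ℕ) * (s (i : ℕ) * s (j : ℕ) * mu ((i : ℕ) + (j : ℕ))) * s (j : ℕ) := by ring
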